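/- arXiv:2405.15115 — 4 statements merged into one kernel-verified Lean document; each statement's English description precedes it below -/
import Mathlib

section
/- For any matrices A ∈ ℝ^{m×n} and B ∈ ℝ^{n×r}, and conjugate exponents p, q with 1/p + 1/q = 1: ‖AB‖_{p,∞} ≤ ‖A‖_{p,q} ‖B‖_{p,∞}, where ‖M‖_{p,s} = (Σ_j ‖M_{:,j}‖_p^s)^{1/s} is the column-wise mixed norm. -/
open scoped ENNReal

/-- The vector `p`-norm on `ℝⁿ`, for `p ∈ [1, ∞]` (an extended nonnegative real):
`(∑ᵢ |xᵢ|^p)^{1/p}` for finite `p`, and `maxᵢ |xᵢ|` for `p = ∞`. -/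
noncomputable def vecPNorm (p : ℝ≥0∞) {n : ℕ} (x : Fin n → ℝ) : ℝ :=
  if p = ∞ then ⨆ i, |x i| else (∑ i, |x i| ^ p.toReal) ^ (1 / p.toReal)

/-- The column-wise mixed `(p,s)`-norm of a matrix:
`‖M‖_{p,s} = (∑_j ‖M_{:,j}‖_p^s)^{1/s}`, with `s = ∞` giving `max_j ‖M_{:,j}‖_p`. -/
noncomputable def mixedNorm (p s : ℝ≥0∞) {m n : ℕ} (A : Matrix (Fin m) (Fin n) ℝ) : ℝ :=
  vecPNorm s (fun j => vecPNorm p (fun i => A i j))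

lemma vecPNorm_nonneg (p : ℝ≥0∞) {n : ℕ} (x : Fin n → ℝ) : 0 ≤ vecPNorm p x := by
  unfold vecPNorm
  split
  · exact Real.iSup_nonneg fun i => abs_nonneg _
  · positivity

lemma vecPNorm_eq_norm (p : ℝ≥0∞) [Fact (1 ≤ p)] {n : ℕ} (x : Fin n → ℝ) :
    vecPNorm p x = @norm (PiLp p (fun _ : Fin n => ℝ)) _ (WithLp.toLp p x) := by
  have hp : (1 : ℝ≥0∞) ≤ p := Fact.out
  rcases eq_or_ne p ∞ with h | h
  · subst h
    simp [vecPNorm, PiLp.norm_eq_ciSup, Real.norm_eq_abs]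
  · have ht : 0 < p.toReal :=
      ENNReal.toReal_pos (fun h0 => by simp [h0] at hp) h
    rw [vecPNorm, if_neg h, PiLp.norm_eq_sum ht]
    simp [Real.norm_eq_abs]

lemma vecPNorm_triangle (p : ℝ≥0∞) [Fact (1 ≤ p)] {m n : ℕ} (c : Fin n → ℝ)
    (v : Fin n → Fin m → ℝ) :
    vecPNorm p (fun i => ∑ k, c k * v k i) ≤ ∑ k, |c k| * vecPNorm p (v k) := by
  simp only [vecPNorm_eq_norm]
  have : WithLp.toLp p (fun i => ∑ k, c k * v k i) =
      (∑ k, c k • (WithLp.toLp p (v k) : PiLp p (fun _ : Fin m => ℝ))) := by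
    ext i
    simp [Finset.sum_apply]
  rw [this]
  refine (norm_sum_le _ _).trans ?_
  refine Finset.sum_le_sum fun k _ => ?_
  rw [norm_smul, Real.norm_eq_abs]

lemma vecPNorm_top {n : ℕ} (x : Fin n → ℝ) : vecPNorm ∞ x = ⨆ i, |x i| := if_pos rfl

lemma vecPNorm_le_iSup {n : ℕ} (y : Fin n → ℝ) (k : Fin n) : |y k| ≤ ⨆ i, |y i| :=
  le_ciSup (f := fun i => |y i|) (Set.Finite.bddAbove (Set.finite_range _)) k

lemma one_le_toReal {p : ℝ≥0∞} (hp : 1 ≤ p) (hp' : p ≠ ∞) : 1 ≤ p.toReal := by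
  rw [show (1 : ℝ) = (1 : ℝ≥0∞).toReal by simp]
  exact ENNReal.toReal_mono hp' hp

lemma holder_sum (p q : ℝ≥0∞) (hp : 1 ≤ p) (hq : 1 ≤ q)
    (hpq : 1 / p + 1 / q = 1) {n : ℕ} (x y : Fin n → ℝ) :
    ∑ k, |x k| * |y k| ≤ vecPNorm q x * vecPNorm p y := by
  have hp0 : p ≠ 0 := fun h => by simp [h] at hp
  have hq0 : q ≠ 0 := fun h => by simp [h] at hq
  rcases eq_or_ne p ∞ with hpi | hpi
  · -- p = ∞, hence q = 1
    have hq1 : q = 1 := by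
      rw [hpi] at hpq
      simp only [ENNReal.div_top, zero_add] at hpq
      rw [one_div, ENNReal.inv_eq_one] at hpq
      exact hpq
    subst hpi; subst hq1
    have : vecPNorm (1 : ℝ≥0∞) x = ∑ k, |x k| := by
      simp [vecPNorm]
    rw [this]
    rw [show vecPNorm (⊤ : ℝ≥0∞) y = ⨆ i, |y i| from by simp [vecPNorm]]
    rw [Finset.sum_mul]
    refine Finset.sum_le_sum fun k _ => ?_
    exact mul_le_mul_of_nonneg_left (vecPNorm_le_iSup y k) (abs_nonneg _)
  rcases eq_or_ne q ∞ with hqi | hqi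
  · -- q = ∞, hence p = 1
    have hp1 : p = 1 := by
      rw [hqi] at hpq
      simp only [ENNReal.div_top, add_zero] at hpq
      rw [one_div, ENNReal.inv_eq_one] at hpq
      exact hpq
    subst hqi; subst hp1
    have : vecPNorm (1 : ℝ≥0∞) y = ∑ k, |y k| := by
      simp [vecPNorm]
    rw [this]
    rw [show vecPNorm (⊤ : ℝ≥0∞) x = ⨆ i, |x i| from by simp [vecPNorm]]
    rw [Finset.mul_sum]
    refine Finset.sum_le_sum fun k _ => ?_
    exact mul_le_mul_of_nonneg_right (vecPNorm_le_iSup x k) (abs_nonneg _)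
  · -- both finite
    have hreal : 1 / q.toReal + 1 / p.toReal = 1 := by
      have h1 : ((1 / p + 1 / q : ℝ≥0∞)).toReal = 1 := by rw [hpq]; simp
      rw [ENNReal.toReal_add (by simp [hp0]) (by simp [hq0])] at h1
      rw [ENNReal.toReal_div, ENNReal.toReal_div] at h1
      simp only [ENNReal.toReal_one] at h1
      linarith
    have hpt : (1 : ℝ) ≤ p.toReal := one_le_toReal hp hpi
    have hqt : (1 : ℝ) ≤ q.toReal := one_le_toReal hq hqi
    have hqlt : 1 < q.toReal := by
      have h1 : 1 / q.toReal < 1 := by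
        have : 0 < 1 / p.toReal := by positivity
        linarith
      rw [div_lt_one (by linarith)] at h1
      exact h1
    have hconj : q.toReal.HolderConjugate p.toReal :=
      Real.holderConjugate_iff.mpr ⟨hqlt, by rw [← one_div, ← one_div]; exact hreal⟩
    have := Real.inner_le_Lp_mul_Lq Finset.univ (fun k => |x k|) (fun k => |y k|) hconj
    simp only [abs_abs] at this
    calc ∑ k, |x k| * |y k|
        ≤ (∑ k, |x k| ^ q.toReal) ^ (1 / q.toReal) *
          (∑ k, |y k| ^ p.toReal) ^ (1 / p.toReal) := this
      _ = vecPNorm q x * vecPNorm p y := by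
          rw [vecPNorm, if_neg hqi, vecPNorm, if_neg hpi]

/-- For any matrices `A ∈ ℝ^{m×n}`, `B ∈ ℝ^{n×r}` and conjugate exponents `p, q` with
`1/p + 1/q = 1`: `‖AB‖_{p,∞} ≤ ‖A‖_{p,q} ‖B‖_{p,∞}`. -/
theorem mixedNorm_mul_le (p q : ℝ≥0∞) (hp : 1 ≤ p) (hq : 1 ≤ q)
    (hpq : 1 / p + 1 / q = 1) {m n r : ℕ}
    (A : Matrix (Fin m) (Fin n) ℝ) (B : Matrix (Fin n) (Fin r) ℝ) :
    mixedNorm p ∞ (A * B) ≤ mixedNorm p q A * mixedNorm p ∞ B := by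
  haveI : Fact (1 ≤ p) := ⟨hp⟩
  have hRHS : 0 ≤ mixedNorm p q A * mixedNorm p ∞ B :=
    mul_nonneg (vecPNorm_nonneg _ _) (vecPNorm_nonneg _ _)
  rw [mixedNorm, vecPNorm_top]
  refine Real.iSup_le (fun j => ?_) hRHS
  rw [abs_of_nonneg (vecPNorm_nonneg _ _)]
  -- column j of A * B
  have hcol : (fun i => (A * B) i j) = fun i => ∑ k, B k j * A i k := by
    funext i
    simp [Matrix.mul_apply, mul_comm]
  rw [hcol]
  calc vecPNorm p (fun i => ∑ k, B k j * A i k)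
      ≤ ∑ k, |B k j| * vecPNorm p (fun i => A i k) :=
        vecPNorm_triangle p (fun k => B k j) (fun k i => A i k)
    _ = ∑ k, |vecPNorm p (fun i => A i k)| * |B k j| := by
        refine Finset.sum_congr rfl fun k _ => ?_
        rw [abs_of_nonneg (vecPNorm_nonneg _ _), mul_comm]
    _ ≤ vecPNorm q (fun k => vecPNorm p (fun i => A i k)) *
        vecPNorm p (fun k => B k j) :=
        holder_sum p q hp hq hpq _ _
    _ ≤ mixedNorm p q A * mixedNorm p ∞ B := by
        rw [mixedNorm]
        refine mul_le_mul_of_nonneg_left ?_ (vecPNorm_nonneg _ _)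
        rw [mixedNorm, vecPNorm_top]
        calc vecPNorm p (fun k => B k j)
            = |vecPNorm p (fun i => B i j)| := by
              rw [abs_of_nonneg (vecPNorm_nonneg _ _)]
          _ ≤ ⨆ j', |vecPNorm p (fun i => B i j')| :=
              vecPNorm_le_iSup (fun j' => vecPNorm p (fun i => B i j')) j
end

section
/- For any two vectors x, y ∈ ℝ^d, the softmax function satisfies ‖softmax(x) − softmax(y)‖₁ ≤ 2‖x − y‖_∞. -/
lemma tanh_aux (M : ℝ) (hM : 0 ≤ M) : Real.exp (2*M) - 1 ≤ M * (Real.exp (2*M) + 1) := by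
  set g : ℝ → ℝ := fun u => u * (Real.exp (2*u) + 1) - (Real.exp (2*u) - 1) with hg
  have key : ∀ t : ℝ, HasDerivAt g
      ((1 * (Real.exp (2*t) + 1) + t * (2 * Real.exp (2*t))) - 2 * Real.exp (2*t)) t := by
    intro t
    have h1 : HasDerivAt (fun u : ℝ => Real.exp (2*u)) (2 * Real.exp (2*t)) t := by
      simpa [mul_comm] using HasDerivAt.exp ((hasDerivAt_id t).const_mul 2)
    exact ((hasDerivAt_id t).mul (h1.add_const 1)).sub (h1.sub_const 1)
  have mono : MonotoneOn g (Set.Ici 0) := by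
    apply monotoneOn_of_deriv_nonneg (convex_Ici 0)
    · exact Continuous.continuousOn (by fun_prop)
    · intro t ht
      exact (key t).differentiableAt.differentiableWithinAt
    · intro t ht
      rw [(key t).deriv]
      have ht0 : 0 < t := by simpa using ht
      have h2 : Real.exp (-(2*t)) * Real.exp (2*t) = 1 := by
        rw [← Real.exp_add]; simp
      nlinarith [Real.add_one_le_exp (-(2*t)), Real.exp_pos (2*t), Real.exp_pos (-(2*t))]
  have h0 := mono (Set.self_mem_Ici) hM hM
  simp only [hg] at h0
  norm_num at h0
  linarith

/-- The softmax function on `ℝ^d`: `softmax(z)_i = exp(z_i) / ∑_j exp(z_j)`. -/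
noncomputable def softmax {d : ℕ} (z : Fin d → ℝ) : Fin d → ℝ :=
  fun i => Real.exp (z i) / ∑ j, Real.exp (z j)

/-- For any `x, y ∈ ℝ^d`, `‖softmax x − softmax y‖₁ ≤ 2 ‖x − y‖_∞`.
The sup norm `‖x - y‖` is the norm of the pi type `Fin d → ℝ`, i.e. `⊔ᵢ |xᵢ - yᵢ|`. -/
theorem softmax_l1_lipschitz {d : ℕ} (x y : Fin d → ℝ) :
    ∑ i, |softmax x i - softmax y i| ≤ 2 * ‖x - y‖ := by
  rcases Nat.eq_zero_or_pos d with hd | hd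
  · subst hd
    simp [mul_nonneg, norm_nonneg]
  have hne : Nonempty (Fin d) := Fin.pos_iff_nonempty.mp hd
  set M := ‖x - y‖ with hMdef
  have hM : 0 ≤ M := norm_nonneg _
  have habs : ∀ i, |x i - y i| ≤ M := fun i => by
    simpa using norm_le_pi_norm (x - y) i
  set Sx := ∑ j, Real.exp (x j) with hSxdef
  set Sy := ∑ j, Real.exp (y j) with hSydef
  have hSx : 0 < Sx := Finset.sum_pos (fun i _ => Real.exp_pos _) Finset.univ_nonempty
  have hSy : 0 < Sy := Finset.sum_pos (fun i _ => Real.exp_pos _) Finset.univ_nonempty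
  have hxy : ∀ i, Real.exp (x i) ≤ Real.exp M * Real.exp (y i) := fun i => by
    rw [← Real.exp_add]
    exact Real.exp_le_exp.mpr (by linarith [(abs_le.mp (habs i)).1, (abs_le.mp (habs i)).2])
  have hyx : ∀ i, Real.exp (y i) ≤ Real.exp M * Real.exp (x i) := fun i => by
    rw [← Real.exp_add]
    exact Real.exp_le_exp.mpr (by linarith [(abs_le.mp (habs i)).1, (abs_le.mp (habs i)).2])
  have hSxy : Sx ≤ Real.exp M * Sy := by
    rw [hSxdef, hSydef, Finset.mul_sum]
    exact Finset.sum_le_sum fun i _ => hxy i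
  have hSyx : Sy ≤ Real.exp M * Sx := by
    rw [hSxdef, hSydef, Finset.mul_sum]
    exact Finset.sum_le_sum fun i _ => hyx i
  set c := Real.exp (2 * M) with hcdef
  have hc1 : 1 ≤ c := Real.one_le_exp (by linarith)
  have hMM : Real.exp M * Real.exp M = c := by
    rw [← Real.exp_add, hcdef]; ring_nf
  have hpq : ∀ i, softmax x i ≤ c * softmax y i := by
    intro i
    rw [softmax, softmax, mul_div_assoc' c, div_le_div_iff₀ hSx hSy]
    have h1 := mul_le_mul (hxy i) hSyx hSy.le
      (mul_nonneg (Real.exp_pos M).le (Real.exp_pos (y i)).le)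
    have h2 : Real.exp M * Real.exp (y i) * (Real.exp M * Sx) = c * Real.exp (y i) * Sx := by
      rw [← hMM]; ring
    linarith
  have hqp : ∀ i, softmax y i ≤ c * softmax x i := by
    intro i
    rw [softmax, softmax, mul_div_assoc' c, div_le_div_iff₀ hSy hSx]
    have h1 := mul_le_mul (hyx i) hSxy hSx.le
      (mul_nonneg (Real.exp_pos M).le (Real.exp_pos (x i)).le)
    have h2 : Real.exp M * Real.exp (x i) * (Real.exp M * Sy) = c * Real.exp (x i) * Sy := by
      rw [← hMM]; ring
    linarith
  have sum_p : ∑ i, softmax x i = 1 := by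
    simp only [softmax, ← Finset.sum_div]
    exact div_self hSx.ne'
  have sum_q : ∑ i, softmax y i = 1 := by
    simp only [softmax, ← Finset.sum_div]
    exact div_self hSy.ne'
  set P : Fin d → Prop := fun i => softmax y i < softmax x i with hP
  set A : Finset (Fin d) := Finset.univ.filter P with hA
  set B : Finset (Fin d) := Finset.univ.filter (fun i => ¬ P i) with hB
  have hsplit : ∑ i, |softmax x i - softmax y i|
      = ∑ i ∈ A, (softmax x i - softmax y i) + ∑ i ∈ B, (softmax y i - softmax x i) := by
    rw [← Finset.sum_filter_add_sum_filter_not Finset.univ P]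
    congr 1
    · exact Finset.sum_congr rfl fun i hi =>
        abs_of_pos (sub_pos.mpr (Finset.mem_filter.mp hi).2)
    · refine Finset.sum_congr rfl fun i hi => ?_
      rw [abs_sub_comm]
      exact abs_of_nonneg (sub_nonneg.mpr (not_lt.mp (Finset.mem_filter.mp hi).2))
  have ha_total : ∑ i ∈ A, softmax x i + ∑ i ∈ B, softmax x i = 1 := by
    rw [Finset.sum_filter_add_sum_filter_not, sum_p]
  have hb_total : ∑ i ∈ A, softmax y i + ∑ i ∈ B, softmax y i = 1 := by
    rw [Finset.sum_filter_add_sum_filter_not, sum_q]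
  have ha : ∑ i ∈ A, softmax x i ≤ c * ∑ i ∈ A, softmax y i := by
    rw [Finset.mul_sum]; exact Finset.sum_le_sum fun i _ => hpq i
  have hb : ∑ i ∈ B, softmax y i ≤ c * ∑ i ∈ B, softmax x i := by
    rw [Finset.mul_sum]; exact Finset.sum_le_sum fun i _ => hqp i
  have haux := tanh_aux M hM
  rw [← hcdef] at haux
  set a := ∑ i ∈ A, softmax x i
  set b := ∑ i ∈ A, softmax y i
  set a' := ∑ i ∈ B, softmax x i
  set b' := ∑ i ∈ B, softmax y i
  have key : (1 + c) * ((a - b) - M) ≤ 0 := by nlinarith [ha, hb, ha_total, hb_total, haux]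
  have hab : a - b ≤ M := by nlinarith [key, hc1]
  have e1 : ∑ i ∈ A, (softmax x i - softmax y i) = a - b := Finset.sum_sub_distrib _ _
  have e2 : ∑ i ∈ B, (softmax y i - softmax x i) = b' - a' := Finset.sum_sub_distrib _ _
  rw [hsplit, e1, e2]
  linarith
end

section
/- (Donsker–Varadhan variational formula) For probability measures P on a measurable space Θ and a measurable function h: Θ → ℝ with exp(h) P-integrable, log E_P[exp h] = sup over probability measures Q with Q ≪ P of ( E_Q[h] − KL(Q‖P) ). -/
open MeasureTheory

/-- The Kullback–Leibler divergence `KL(Q‖P) = ∫ log(dQ/dP) dQ` (as a real number,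
via the log-likelihood ratio), for `Q ≪ P`. -/
noncomputable def klDivReal {α : Type*} [MeasurableSpace α] (Q P : Measure α) : ℝ :=
  ∫ x, llr Q P x ∂Q

open Real Filter
open scoped ENNReal Topology

/-- `-x * exp x ≤ exp (-1)` for negative `x`. -/
lemma neg_mul_exp_le_aux {x : ℝ} (hx : x < 0) : -x * Real.exp x ≤ Real.exp (-1) := by
  have hpos : 0 < -x := by linarith
  have hlog : Real.log (-x) ≤ -x - 1 := Real.log_le_sub_one_of_pos hpos
  calc -x * Real.exp x = Real.exp (Real.log (-x)) * Real.exp x := by rw [Real.exp_log hpos]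
    _ = Real.exp (Real.log (-x) + x) := (Real.exp_add _ _).symm
    _ ≤ Real.exp (-1) := Real.exp_le_exp.mpr (by linarith)

/-- Nonnegativity of the KL divergence. -/
lemma kl_nonneg_aux {α : Type*} [MeasurableSpace α] (μ ν : Measure α)
    [IsProbabilityMeasure μ] [IsProbabilityMeasure ν] (hμν : μ ≪ ν)
    (hint : Integrable (llr μ ν) μ) : 0 ≤ ∫ x, llr μ ν x ∂μ := by
  set f := μ.rnDeriv ν with hf
  set u : α → ℝ := fun x => ((f x).toReal)⁻¹ with hu
  have hu_meas : Measurable u := (Measure.measurable_rnDeriv μ ν).ennreal_toReal.inv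
  have hu_nonneg : 0 ≤ᵐ[μ] u := Filter.Eventually.of_forall fun x => by positivity
  have key : ∫⁻ x, ENNReal.ofReal (u x) ∂μ ≤ 1 := by
    conv_lhs => rw [← Measure.withDensity_rnDeriv_eq μ ν hμν]
    rw [lintegral_withDensity_eq_lintegral_mul ν (Measure.measurable_rnDeriv μ ν)
      hu_meas.ennreal_ofReal]
    have hb : ∀ᵐ x ∂ν, (f * fun x => ENNReal.ofReal (u x)) x ≤ 1 := by
      filter_upwards [Measure.rnDeriv_lt_top μ ν] with x hlt
      simp only [Pi.mul_apply]
      rcases eq_or_ne (f x) 0 with h0 | h0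
      · simp [h0]
      · have : ENNReal.ofReal (u x) = (f x)⁻¹ := by
          rw [hu]
          simp only
          rw [ENNReal.ofReal_inv_of_pos (ENNReal.toReal_pos h0 hlt.ne),
            ENNReal.ofReal_toReal hlt.ne]
        rw [this, ENNReal.mul_inv_cancel h0 hlt.ne]
    calc ∫⁻ x, (f * fun x => ENNReal.ofReal (u x)) x ∂ν ≤ ∫⁻ _, 1 ∂ν :=
          lintegral_mono_ae hb
      _ = 1 := by simp
  have hu_int : Integrable u μ := by
    rw [← lintegral_ofReal_ne_top_iff_integrable hu_meas.aestronglyMeasurable hu_nonneg]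
    exact ne_top_of_le_ne_top (by simp) key
  have hu_le : ∫ x, u x ∂μ ≤ 1 := by
    rw [integral_eq_lintegral_of_nonneg_ae hu_nonneg hu_meas.aestronglyMeasurable]
    calc (∫⁻ x, ENNReal.ofReal (u x) ∂μ).toReal ≤ (1 : ℝ≥0∞).toReal :=
          ENNReal.toReal_mono (by simp) key
      _ = 1 := by simp
  have hae : ∀ᵐ x ∂μ, -llr μ ν x ≤ u x - 1 := by
    filter_upwards [Measure.rnDeriv_pos hμν, hμν.ae_le (Measure.rnDeriv_lt_top μ ν)]
      with x hpos hlt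
    have htR : 0 < (f x).toReal := ENNReal.toReal_pos hpos.ne' hlt.ne
    have huq : 0 < u x := by positivity
    have hlog : -llr μ ν x = Real.log (u x) := by
      rw [llr, ← Real.log_inv]
    rw [hlog]
    exact Real.log_le_sub_one_of_pos huq
  have h1 : ∫ x, -llr μ ν x ∂μ ≤ ∫ x, (u x - 1) ∂μ :=
    integral_mono_ae hint.neg (hu_int.sub (integrable_const 1)) hae
  rw [integral_neg, integral_sub hu_int (integrable_const 1)] at h1
  simp only [integral_const, measure_univ, probReal_univ, ENNReal.toReal_one, smul_eq_mul, one_mul] at h1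
  linarith

/-- Donsker–Varadhan variational formula: for a probability measure `P` on `Θ` and a
measurable `h : Θ → ℝ` with `exp h` `P`-integrable,
`log E_P[exp h]` is the supremum (least upper bound) over probability measures `Q ≪ P`
(for which `E_Q[h]` and `KL(Q‖P)` are well-defined) of `E_Q[h] − KL(Q‖P)`. -/
theorem donsker_varadhan {Θ : Type*} [MeasurableSpace Θ] (P : Measure Θ)
    [IsProbabilityMeasure P] (h : Θ → ℝ) (hmeas : Measurable h)
    (hint : Integrable (fun θ => Real.exp (h θ)) P) :
    IsLUB {z : ℝ | ∃ Q : Measure Θ, IsProbabilityMeasure Q ∧ Q ≪ P ∧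
        Integrable h Q ∧ Integrable (llr Q P) Q ∧
        z = ∫ θ, h θ ∂Q - klDivReal Q P}
      (Real.log (∫ θ, Real.exp (h θ) ∂P)) := by
  have hZ : 0 < ∫ θ, Real.exp (h θ) ∂P := integral_exp_pos hint
  constructor
  · -- upper bound
    rintro z ⟨Q, hQprob, hQP, hhQ, hllrQ, rfl⟩
    haveI := hQprob
    haveI : IsProbabilityMeasure (P.tilted h) := isProbabilityMeasure_tilted hint
    have hQt : Q ≪ P.tilted h := hQP.trans (absolutelyContinuous_tilted hint)
    have h_eq := integral_llr_tilted_right (μ := Q) (ν := P) hQP hhQ hint hllrQ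
    have h_int' : Integrable (llr Q (P.tilted h)) Q :=
      integrable_llr_tilted_right hQP hhQ hllrQ hint
    have h_nn := kl_nonneg_aux Q (P.tilted h) hQt h_int'
    rw [h_eq] at h_nn
    simp only [klDivReal]
    linarith
  · -- least upper bound
    intro b hb
    set g : ℕ → Θ → ℝ := fun n θ => min (h θ) n with hgdef
    have hg_meas : ∀ n, Measurable (g n) := fun n => hmeas.min measurable_const
    have hg_le_h : ∀ n θ, g n θ ≤ h θ := fun n θ => min_le_left _ _
    have hg_le_n : ∀ n θ, g n θ ≤ n := fun n θ => min_le_right _ _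
    have hg_exp_int : ∀ n, Integrable (fun θ => Real.exp (g n θ)) P := by
      intro n
      refine hint.mono' ((hg_meas n).exp.aestronglyMeasurable) ?_
      refine Filter.Eventually.of_forall fun θ => ?_
      rw [Real.norm_eq_abs, abs_of_pos (Real.exp_pos _)]
      exact Real.exp_le_exp.mpr (hg_le_h n θ)
    have hZn : ∀ n, 0 < ∫ θ, Real.exp (g n θ) ∂P := fun n => integral_exp_pos (hg_exp_int n)
    -- for each n, a value at least `log Zn` belongs to the set
    have key : ∀ n : ℕ, Real.log (∫ θ, Real.exp (g n θ) ∂P) ≤ b := by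
      intro n
      set Qn : Measure Θ := P.tilted (g n) with hQn
      haveI hQnP : IsProbabilityMeasure Qn := isProbabilityMeasure_tilted (hg_exp_int n)
      have hac : Qn ≪ P := tilted_absolutelyContinuous P (g n)
      set Zn : ℝ := ∫ θ, Real.exp (g n θ) ∂P with hZn'
      have hZnpos : 0 < Zn := hZn n
      have hdens_meas : Measurable fun θ => ENNReal.ofReal (Real.exp (g n θ) / Zn) :=
        (((hg_meas n).exp).div_const Zn).ennreal_ofReal
      -- integrability criterion for `Qn`
      have hwd : ∀ (φ : Θ → ℝ), Measurable φ →
          (∀ θ, |φ θ| * Real.exp (g n θ) ≤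
            Real.exp (n : ℝ) * Real.exp (h θ) + Real.exp (-1)) →
          Integrable φ Qn := by
        intro φ hφm hφbd
        rw [hQn, Measure.tilted, integrable_withDensity_iff hdens_meas
          (Filter.Eventually.of_forall fun _ => ENNReal.ofReal_lt_top)]
        have hb_int : Integrable
            (fun θ => (Real.exp (n : ℝ) * Real.exp (h θ) + Real.exp (-1)) * Zn⁻¹) P :=
          ((hint.const_mul _).add (integrable_const _)).mul_const _
        refine hb_int.mono' ((hφm.mul hdens_meas.ennreal_toReal).aestronglyMeasurable)
          (Filter.Eventually.of_forall fun θ => ?_)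
        rw [ENNReal.toReal_ofReal (by positivity)]
        rw [Real.norm_eq_abs, abs_mul,
          abs_of_nonneg (by positivity : (0:ℝ) ≤ Real.exp (g n θ) / Zn)]
        rw [div_eq_mul_inv, ← mul_assoc]
        exact mul_le_mul_of_nonneg_right (hφbd θ) (by positivity)
      have hh_int : Integrable h Qn := by
        refine hwd h hmeas fun θ => ?_
        rcases le_or_gt 0 (h θ) with hθ | hθ
        · have h1 : h θ ≤ Real.exp (h θ) := by linarith [Real.add_one_le_exp (h θ)]
          have h2 : Real.exp (g n θ) ≤ Real.exp (n : ℝ) :=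
            Real.exp_le_exp.mpr (hg_le_n n θ)
          have h3 := mul_le_mul h1 h2 (Real.exp_pos _).le (Real.exp_pos _).le
          rw [abs_of_nonneg hθ]
          have := (Real.exp_pos (-1)).le
          nlinarith
        · have hgθ : g n θ = h θ := min_eq_left (hθ.le.trans (Nat.cast_nonneg n))
          rw [hgθ, abs_of_neg hθ]
          have := neg_mul_exp_le_aux hθ
          have := mul_nonneg (Real.exp_pos (n : ℝ)).le (Real.exp_pos (h θ)).le
          linarith
      have hgn_int : Integrable (g n) Qn := by
        refine hwd (g n) (hg_meas n) fun θ => ?_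
        rcases le_or_gt 0 (g n θ) with hθ | hθ
        · have h1 : g n θ ≤ Real.exp (g n θ) := by linarith [Real.add_one_le_exp (g n θ)]
          have h2 : Real.exp (g n θ) * Real.exp (g n θ) ≤
              Real.exp (n : ℝ) * Real.exp (h θ) :=
            mul_le_mul (Real.exp_le_exp.mpr (hg_le_n n θ))
              (Real.exp_le_exp.mpr (hg_le_h n θ)) (Real.exp_pos _).le (Real.exp_pos _).le
          have h3 : g n θ * Real.exp (g n θ) ≤ Real.exp (g n θ) * Real.exp (g n θ) :=
            mul_le_mul_of_nonneg_right h1 (Real.exp_pos _).le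
          rw [abs_of_nonneg hθ]
          have := (Real.exp_pos (-1)).le
          linarith
        · rw [abs_of_neg hθ]
          have := neg_mul_exp_le_aux hθ
          have := mul_nonneg (Real.exp_pos (n : ℝ)).le (Real.exp_pos (h θ)).le
          linarith
      -- the log-likelihood ratio of the tilted measure
      have hllr_eq : llr Qn P =ᵐ[Qn] fun θ => g n θ - Real.log Zn := by
        have h1 : llr (P.tilted (g n)) P =ᵐ[P]
            fun x => g n x - Real.log Zn + llr P P x :=
          llr_tilted_left Measure.AbsolutelyContinuous.rfl (hg_exp_int n)
            (hg_meas n).aemeasurable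
        have h2 : llr P P =ᵐ[P] fun _ => 0 := by
          filter_upwards [Measure.rnDeriv_self P] with x hx
          simp [llr, hx]
        have h3 : llr (P.tilted (g n)) P =ᵐ[P] fun x => g n x - Real.log Zn := by
          filter_upwards [h1, h2] with x hx1 hx2
          rw [hx1, hx2, add_zero]
        exact hac.ae_le h3
      have hllr_int : Integrable (llr Qn P) Qn :=
        (integrable_congr hllr_eq).mpr (hgn_int.sub (integrable_const _))
      have hKL : klDivReal Qn P = ∫ θ, g n θ ∂Qn - Real.log Zn := by
        rw [klDivReal, integral_congr_ae hllr_eq,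
          integral_sub hgn_int (integrable_const _)]
        simp
      -- the corresponding element of the set
      have hmem : (∫ θ, h θ ∂Qn - klDivReal Qn P) ∈ {z : ℝ | ∃ Q : Measure Θ,
          IsProbabilityMeasure Q ∧ Q ≪ P ∧ Integrable h Q ∧ Integrable (llr Q P) Q ∧
          z = ∫ θ, h θ ∂Q - klDivReal Q P} :=
        ⟨Qn, hQnP, hac, hh_int, hllr_int, rfl⟩
      have hge : Real.log Zn ≤ ∫ θ, h θ ∂Qn - klDivReal Qn P := by
        rw [hKL]
        have h0 : 0 ≤ ∫ θ, (h θ - g n θ) ∂Qn :=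
          integral_nonneg fun θ => sub_nonneg.mpr (hg_le_h n θ)
        rw [integral_sub hh_int hgn_int] at h0
        linarith
      exact hge.trans (hb hmem)
    -- monotone convergence
    have hZtend : Filter.Tendsto (fun n => ∫ θ, Real.exp (g n θ) ∂P) Filter.atTop
        (𝓝 (∫ θ, Real.exp (h θ) ∂P)) := by
      refine integral_tendsto_of_tendsto_of_monotone hg_exp_int hint ?_ ?_
      · exact Filter.Eventually.of_forall fun θ m k hmk =>
          Real.exp_le_exp.mpr (min_le_min le_rfl (Nat.cast_le.mpr hmk))
      · refine Filter.Eventually.of_forall fun θ => ?_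
        have hev : ∀ᶠ n : ℕ in Filter.atTop,
            Real.exp (g n θ) = Real.exp (h θ) := by
          filter_upwards [Filter.eventually_ge_atTop ⌈h θ⌉₊] with n hn
          have h1 : h θ ≤ (n : ℝ) :=
            (Nat.le_ceil (h θ)).trans (by exact_mod_cast hn)
          simp [hgdef, min_eq_left h1]
        exact Filter.Tendsto.congr' (hev.mono fun n hn => hn.symm) tendsto_const_nhds
    have hlogtend : Filter.Tendsto (fun n => Real.log (∫ θ, Real.exp (g n θ) ∂P))
        Filter.atTop (𝓝 (Real.log (∫ θ, Real.exp (h θ) ∂P))) :=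
      ((Real.continuousAt_log hZ.ne').tendsto).comp hZtend
    exact le_of_tendsto hlogtend (Filter.Eventually.of_forall key)
end

section
/- (McDiarmid MGF bound for independent variables) Let X = (X₁,…,X_N) be independent random variables with X_i taking values in Λ_i, and let f: Λ₁ × ⋯ × Λ_N → ℝ satisfy f(x) − f(y) ≤ Σᵢ cᵢ·1{xᵢ ≠ yᵢ} for all x, y. Then for any λ ∈ ℝ, E[exp(λ(f(X) − E[f(X)]))] ≤ exp(λ²‖c‖₂²/2). -/
open MeasureTheory ProbabilityTheory

section Aux

variable {α : Type*} [MeasurableSpace α]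

lemma integrable_of_bdd {ν : Measure α} [IsFiniteMeasure ν] {h : α → ℝ}
    (hm : Measurable h) {C : ℝ} (hb : ∀ t, |h t| ≤ C) : Integrable h ν :=
  ⟨hm.aestronglyMeasurable,
    HasFiniteIntegral.of_bounded (C := C) (Filter.Eventually.of_forall fun t => by
      simpa using hb t)⟩

/-- If `g` is centered and bounded by `c`, then `E[exp (l g)] ≤ exp (l² c² / 2)`. -/
lemma mgf_bdd_centered (ν : Measure α) [IsProbabilityMeasure ν]
    {g : α → ℝ} (hg : Measurable g) {c : ℝ} (hc : 0 ≤ c)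
    (hbd : ∀ t, |g t| ≤ c) (hmean : ∫ t, g t ∂ν = 0) (l : ℝ) :
    ∫ t, Real.exp (l * g t) ∂ν ≤ Real.exp (l ^ 2 * c ^ 2 / 2) := by
  rcases eq_or_lt_of_le hc with hc0 | hcpos
  · have hg0 : ∀ t, g t = 0 := fun t => by
      have := hbd t; rw [← hc0] at this
      exact abs_eq_zero.mp (le_antisymm this (abs_nonneg _))
    simp [hg0, ← hc0]
  · set E1 := Real.exp (l * c) with hE1
    set E2 := Real.exp (-(l * c)) with hE2
    have hptwise : ∀ t, Real.exp (l * g t) ≤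
        (E1 + E2) / 2 + g t * ((E1 - E2) / (2 * c)) := by
      intro t
      have habs := hbd t
      rw [abs_le] at habs
      have ha : (0:ℝ) ≤ (c + g t) / (2 * c) := by
        apply div_nonneg (by linarith [habs.1]) (by linarith)
      have hb : (0:ℝ) ≤ (c - g t) / (2 * c) := by
        apply div_nonneg (by linarith [habs.2]) (by linarith)
      have hab : (c + g t) / (2 * c) + (c - g t) / (2 * c) = 1 := by
        field_simp
        ring
      have hcvx := convexOn_exp.2 (Set.mem_univ (l * c)) (Set.mem_univ (-(l * c)))
        ha hb hab
      have harg : ((c + g t) / (2 * c)) • (l * c) + ((c - g t) / (2 * c)) • (-(l * c))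
          = l * g t := by
        rw [smul_eq_mul, smul_eq_mul]
        field_simp
        ring
      rw [harg] at hcvx
      refine hcvx.trans (le_of_eq ?_)
      rw [← hE1, ← hE2]
      rw [smul_eq_mul, smul_eq_mul]
      field_simp
      ring
    have hint_exp : Integrable (fun t => Real.exp (l * g t)) ν := by
      refine integrable_of_bdd (by fun_prop) (C := Real.exp (|l| * c)) fun t => ?_
      rw [abs_of_pos (Real.exp_pos _)]
      apply Real.exp_le_exp.mpr
      calc l * g t ≤ |l * g t| := le_abs_self _
        _ = |l| * |g t| := abs_mul _ _
        _ ≤ |l| * c := mul_le_mul_of_nonneg_left (hbd t) (abs_nonneg _)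
    have hint_g : Integrable g ν := integrable_of_bdd hg hbd
    calc ∫ t, Real.exp (l * g t) ∂ν
        ≤ ∫ t, ((E1 + E2) / 2 + g t * ((E1 - E2) / (2 * c))) ∂ν :=
          integral_mono hint_exp
            ((integrable_const _).add (hint_g.mul_const _)) hptwise
      _ = (E1 + E2) / 2 := by
          rw [integral_add (integrable_const _) (hint_g.mul_const _),
            integral_const, integral_mul_const, hmean]
          simp
      _ = Real.cosh (l * c) := by rw [Real.cosh_eq]
      _ ≤ Real.exp ((l * c) ^ 2 / 2) := Real.cosh_le_exp_half_sq _
      _ = Real.exp (l ^ 2 * c ^ 2 / 2) := by rw [mul_pow]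

universe u

/-- McDiarmid MGF bound for product measures. -/
lemma mcdiarmid_mgf_pi (N : ℕ) :
    ∀ {Λ : Fin N → Type u} [inst : ∀ i, MeasurableSpace (Λ i)]
      [∀ i, DecidableEq (Λ i)]
      (ν : ∀ i, Measure (Λ i)) [∀ i, IsProbabilityMeasure (ν i)]
      (f : (∀ i, Λ i) → ℝ) (_ : Measurable f)
      (c : Fin N → ℝ) (_ : ∀ i, 0 ≤ c i)
      (_ : ∀ x y : ∀ i, Λ i, f x - f y ≤ ∑ i, if x i ≠ y i then c i else 0)
      (l : ℝ),
      ∫ x, Real.exp (l * (f x - ∫ x', f x' ∂(Measure.pi ν))) ∂(Measure.pi ν) ≤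
        Real.exp (l ^ 2 * (∑ i, c i ^ 2) / 2) := by
  induction N with
  | zero =>
      intro Λ _ _ ν _ f hf c hc hbd l
      have hconst : ∀ x : ∀ i, Λ i, f x = f default := fun x => by
        congr 1; exact Subsingleton.elim _ _
      have heq : (fun x : ∀ i, Λ i =>
          Real.exp (l * (f x - ∫ x', f x' ∂(Measure.pi ν)))) = fun _ => (1:ℝ) := by
        funext x
        rw [hconst x]
        have h2 : ∫ x', f x' ∂(Measure.pi ν) = f default := by
          have h3 : (fun x' : ∀ i, Λ i => f x') = fun _ => f default := funext hconst
          rw [h3, integral_const]; simp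
        rw [h2]; simp
      rw [heq]
      simp
  | succ n ih =>
      intro Λ _ _ ν _ f hf c hc hbd l
      -- nonemptiness and boundedness of f
      have hne : ∀ i, Nonempty (Λ i) := by
        intro i
        by_contra h
        rw [not_nonempty_iff] at h
        have h1 : (ν i) Set.univ = 1 := measure_univ
        rw [Set.univ_eq_empty_iff.2 h, measure_empty] at h1
        exact zero_ne_one h1
      obtain ⟨x₀⟩ : Nonempty (∀ i, Λ i) := ⟨fun i => Classical.arbitrary _⟩
      set B : ℝ := |f x₀| + ∑ i, c i with hB
      have hsum_le : ∀ x y : ∀ i, Λ i,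
          (∑ i, if x i ≠ y i then c i else 0) ≤ ∑ i, c i := by
        intro x y
        apply Finset.sum_le_sum
        intro i _
        split <;> simp [hc i]
      have hfB : ∀ x, |f x| ≤ B := by
        intro x
        rw [abs_le]
        constructor
        · have h1 := (hbd x₀ x).trans (hsum_le x₀ x)
          have h2 := neg_abs_le (f x₀)
          simp only [hB]; linarith
        · have h1 := (hbd x x₀).trans (hsum_le x x₀)
          have h2 := le_abs_self (f x₀)
          simp only [hB]; linarith
      -- split off coordinate 0
      set π := Measure.pi ν with hπ
      set M := ∫ x, f x ∂π with hM
      set e := MeasurableEquiv.piFinSuccAbove Λ 0 with he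
      have mp := measurePreserving_piFinSuccAbove ν 0
      set νr := Measure.pi (fun j => ν ((0 : Fin (n+1)).succAbove j)) with hνr
      set g : Λ 0 × (∀ j, Λ ((0 : Fin (n+1)).succAbove j)) → ℝ :=
        fun p => f (e.symm p) with hg
      have hgmeas : Measurable g := hf.comp e.symm.measurable
      have hgB : ∀ p, |g p| ≤ B := fun p => hfB _
      have hesymm : ∀ (t : Λ 0) (y : ∀ j, Λ ((0 : Fin (n+1)).succAbove j)),
          e.symm (t, y) = Fin.insertNth 0 t y := fun t y => rfl
      have hgefx : ∀ x, g (e x) = f x := fun x => by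
        simp only [hg, MeasurableEquiv.symm_apply_apply]
      -- bounded-difference fact for g
      have hgdiff : ∀ (t t' : Λ 0) (y y' : ∀ j, Λ ((0 : Fin (n+1)).succAbove j)),
          g (t, y) - g (t', y') ≤ (if t ≠ t' then c 0 else 0) +
            ∑ j, (if y j ≠ y' j then c ((0 : Fin (n+1)).succAbove j) else 0) := by
        intro t t' y y'
        have h1 := hbd (e.symm (t, y)) (e.symm (t', y'))
        rw [hesymm, hesymm] at h1
        refine h1.trans (le_of_eq ?_)
        rw [Fin.sum_univ_succAbove
          (fun i => if Fin.insertNth 0 t y i ≠ Fin.insertNth 0 t' y' i then c i else 0) 0]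
        simp only [Fin.insertNth_apply_same, Fin.insertNth_apply_succAbove]
      have hgdiffA : ∀ (t t' : Λ 0) y, g (t, y) - g (t', y) ≤ c 0 := by
        intro t t' y
        refine (hgdiff t t' y y).trans ?_
        simp only [ne_eq, not_true_eq_false, if_false, Finset.sum_const_zero, add_zero]
        split <;> simp [hc 0]
      have hgdiffB : ∀ (t : Λ 0) y y', g (t, y) - g (t, y') ≤
          ∑ j, (if y j ≠ y' j then c ((0 : Fin (n+1)).succAbove j) else 0) := by
        intro t y y'
        refine (hgdiff t t y y').trans ?_
        simp
      -- properties of the conditional mean F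
      set F : (∀ j, Λ ((0 : Fin (n+1)).succAbove j)) → ℝ :=
        fun y => ∫ t, g (t, y) ∂(ν 0) with hF
      have hFmeas : Measurable F :=
        (hgmeas.stronglyMeasurable.integral_prod_left').measurable
      have hgint_y : ∀ y, Integrable (fun t => g (t, y)) (ν 0) := fun y =>
        integrable_of_bdd (hgmeas.comp measurable_prodMk_right) (fun t => hgB _)
      have hFB : ∀ y, |F y| ≤ B := by
        intro y
        have h1 : ‖∫ t, g (t, y) ∂(ν 0)‖ ≤ B * ((ν 0) Set.univ).toReal :=
          norm_integral_le_of_norm_le_const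
            (Filter.Eventually.of_forall fun t => by simpa using hgB (t, y))
        simpa [hF] using h1
      have hgcenter : ∀ y t, |g (t, y) - F y| ≤ c 0 := by
        intro y t
        have h1 : g (t, y) - c 0 ≤ F y := by
          have h2 : ∫ t', (g (t, y) - c 0) ∂(ν 0) ≤ ∫ t', g (t', y) ∂(ν 0) :=
            integral_mono (integrable_const _) (hgint_y y)
              (fun t' => by linarith [hgdiffA t t' y])
          rw [integral_const] at h2
          simpa [hF] using h2
        have h3 : F y ≤ g (t, y) + c 0 := by
          have h4 : ∫ t', g (t', y) ∂(ν 0) ≤ ∫ t', (g (t, y) + c 0) ∂(ν 0) :=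
            integral_mono (hgint_y y) (integrable_const _)
              (fun t' => by linarith [hgdiffA t' t y])
          rw [integral_const] at h4
          simpa [hF] using h4
        rw [abs_le]
        constructor <;> linarith
      have hFmean : ∀ y, ∫ t, (g (t, y) - F y) ∂(ν 0) = 0 := by
        intro y
        rw [integral_sub (hgint_y y) (integrable_const _), integral_const]
        simp [hF]
      -- inner bound via the centered mgf lemma
      set K := Real.exp (l ^ 2 * (c 0) ^ 2 / 2) with hK
      have hinner : ∀ y, ∫ t, Real.exp (l * (g (t, y) - M)) ∂(ν 0) ≤
          K * Real.exp (l * (F y - M)) := by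
        intro y
        have hsplit : ∫ t, Real.exp (l * (g (t, y) - M)) ∂(ν 0) =
            (∫ t, Real.exp (l * (g (t, y) - F y)) ∂(ν 0)) * Real.exp (l * (F y - M)) := by
          rw [← integral_mul_const]
          congr 1
          funext t
          rw [← Real.exp_add]
          ring_nf
        rw [hsplit]
        refine mul_le_mul_of_nonneg_right ?_ (Real.exp_pos _).le
        exact mgf_bdd_centered (ν 0)
          ((hgmeas.comp measurable_prodMk_right).sub measurable_const)
          (hc 0) (hgcenter y) (hFmean y) l
      -- integrability on the product
      set φ : Λ 0 × (∀ j, Λ ((0 : Fin (n+1)).succAbove j)) → ℝ :=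
        fun p => Real.exp (l * (g p - M)) with hφ
      have hφmeas : Measurable φ := by fun_prop
      have hφbd : ∀ p, |φ p| ≤ Real.exp (|l| * (B + |M|)) := by
        intro p
        rw [hφ, abs_of_pos (Real.exp_pos _)]
        apply Real.exp_le_exp.mpr
        calc l * (g p - M) ≤ |l * (g p - M)| := le_abs_self _
          _ = |l| * |g p - M| := abs_mul _ _
          _ ≤ |l| * (B + |M|) := by
              refine mul_le_mul_of_nonneg_left ?_ (abs_nonneg _)
              calc |g p - M| ≤ |g p| + |M| := abs_sub _ _
                _ ≤ B + |M| := by linarith [hgB p]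
      have hφint : Integrable φ ((ν 0).prod νr) := integrable_of_bdd hφmeas hφbd
      have hgint : Integrable g ((ν 0).prod νr) := integrable_of_bdd hgmeas hgB
      -- M equals the mean of F
      have hMg : M = ∫ p, g p ∂((ν 0).prod νr) := by
        rw [← mp.integral_comp e.measurableEmbedding g]
        simp only [← he, hgefx, hM, hπ]
      have hMF : M = ∫ y, F y ∂νr := by
        rw [hMg, integral_prod_symm g hgint]
      -- bounded differences for F
      have hbdF : ∀ y y', F y - F y' ≤
          ∑ j, (if y j ≠ y' j then c ((0 : Fin (n+1)).succAbove j) else 0) := by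
        intro y y'
        have h1 : F y - F y' = ∫ t, (g (t, y) - g (t, y')) ∂(ν 0) := by
          rw [integral_sub (hgint_y y) (hgint_y y')]
        rw [h1]
        have h2 : ∫ t, (g (t, y) - g (t, y')) ∂(ν 0) ≤
            ∫ _, (∑ j, (if y j ≠ y' j then c ((0 : Fin (n+1)).succAbove j) else 0))
              ∂(ν 0) :=
          integral_mono ((hgint_y y).sub (hgint_y y')) (integrable_const _)
            (fun t => hgdiffB t y y')
        rw [integral_const] at h2
        simpa using h2
      -- main chain
      have step1 : ∫ x, Real.exp (l * (f x - M)) ∂π = ∫ p, φ p ∂((ν 0).prod νr) := by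
        rw [← mp.integral_comp e.measurableEmbedding φ]
        congr 1
        funext x
        simp only [hφ, ← he, hgefx]
      have hFint : Integrable (fun y => K * Real.exp (l * (F y - M))) νr := by
        refine Integrable.const_mul ?_ K
        refine integrable_of_bdd (by fun_prop) (C := Real.exp (|l| * (B + |M|))) fun y => ?_
        rw [abs_of_pos (Real.exp_pos _)]
        apply Real.exp_le_exp.mpr
        calc l * (F y - M) ≤ |l * (F y - M)| := le_abs_self _
          _ = |l| * |F y - M| := abs_mul _ _
          _ ≤ |l| * (B + |M|) := by
              refine mul_le_mul_of_nonneg_left ?_ (abs_nonneg _)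
              calc |F y - M| ≤ |F y| + |M| := abs_sub _ _
                _ ≤ B + |M| := by linarith [hFB y]
      have step2 : ∫ p, φ p ∂((ν 0).prod νr) ≤
          K * ∫ y, Real.exp (l * (F y - M)) ∂νr := by
        rw [integral_prod_symm φ hφint, ← integral_const_mul]
        refine integral_mono_of_nonneg ?_ hFint ?_
        · exact Filter.Eventually.of_forall fun y =>
            integral_nonneg fun t => (Real.exp_pos _).le
        · exact Filter.Eventually.of_forall fun y => hinner y
      have step3 : ∫ y, Real.exp (l * (F y - M)) ∂νr ≤
          Real.exp (l ^ 2 * (∑ j, c ((0 : Fin (n+1)).succAbove j) ^ 2) / 2) := by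
        have hMF' : M = ∫ y', F y' ∂νr := hMF
        have := ih (Λ := fun j => Λ ((0 : Fin (n+1)).succAbove j))
          (fun j => ν ((0 : Fin (n+1)).succAbove j)) F hFmeas
          (fun j => c ((0 : Fin (n+1)).succAbove j))
          (fun j => hc _) hbdF l
        rw [← hνr, ← hMF'] at this
        exact this
      calc ∫ x, Real.exp (l * (f x - M)) ∂π = ∫ p, φ p ∂((ν 0).prod νr) := step1
        _ ≤ K * ∫ y, Real.exp (l * (F y - M)) ∂νr := step2
        _ ≤ K * Real.exp (l ^ 2 * (∑ j, c ((0 : Fin (n+1)).succAbove j) ^ 2) / 2) :=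
            mul_le_mul_of_nonneg_left step3 (Real.exp_pos _).le
        _ = Real.exp (l ^ 2 * (∑ i, c i ^ 2) / 2) := by
            rw [hK, ← Real.exp_add]
            congr 1
            rw [Fin.sum_univ_succAbove (fun i => c i ^ 2) 0]
            ring

end Aux

/-- McDiarmid moment-generating-function bound for independent random variables:
if `X₁, …, X_N` are independent with `Xᵢ` valued in `Λᵢ`, and `f` satisfies the bounded
differences condition `f(x) − f(y) ≤ ∑ᵢ cᵢ·1{xᵢ ≠ yᵢ}`, then for any `λ ∈ ℝ`,
`E[exp(λ(f(X) − E[f(X)]))] ≤ exp(λ²‖c‖₂²/2)`. -/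
theorem mcdiarmid_mgf {Ω : Type*} [MeasurableSpace Ω] (μ : Measure Ω)
    [IsProbabilityMeasure μ] {N : ℕ} {Λ : Fin N → Type*}
    [∀ i, MeasurableSpace (Λ i)] [∀ i, DecidableEq (Λ i)]
    (X : ∀ i, Ω → Λ i) (hXmeas : ∀ i, Measurable (X i))
    (hXindep : iIndepFun X μ)
    (f : (∀ i, Λ i) → ℝ) (hf : Measurable f)
    (c : Fin N → ℝ) (hc : ∀ i, 0 ≤ c i)
    (hbd : ∀ x y : ∀ i, Λ i, f x - f y ≤ ∑ i, if x i ≠ y i then c i else 0)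
    (hint : Integrable (fun ω => f (fun i => X i ω)) μ) (l : ℝ) :
    ∫ ω, Real.exp (l * (f (fun i => X i ω) - ∫ ω', f (fun i => X i ω') ∂μ)) ∂μ ≤
      Real.exp (l ^ 2 * (∑ i, c i ^ 2) / 2) := by
  set Y : Ω → ∀ i, Λ i := fun ω i => X i ω with hY
  have hYmeas : Measurable Y := measurable_pi_lambda _ hXmeas
  set ν : ∀ i, Measure (Λ i) := fun i => μ.map (X i) with hν
  haveI : ∀ i, IsProbabilityMeasure (ν i) := fun i =>
    Measure.isProbabilityMeasure_map (hXmeas i).aemeasurable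
  have hmap : μ.map Y = Measure.pi ν := by
    refine (Measure.pi_eq fun s hs => ?_).symm
    rw [Measure.map_apply hYmeas (MeasurableSet.univ_pi hs)]
    have hpre : Y ⁻¹' Set.pi Set.univ s = ⋂ i ∈ Finset.univ, X i ⁻¹' s i := by
      ext ω; simp [Set.mem_pi, hY]
    rw [hpre, hXindep.measure_inter_preimage_eq_mul Finset.univ (fun i _ => hs i)]
    refine Finset.prod_congr rfl fun i _ => ?_
    rw [hν]
    rw [Measure.map_apply (hXmeas i) (hs i)]
  have h1 : ∫ ω', f (fun i => X i ω') ∂μ = ∫ x, f x ∂(Measure.pi ν) := by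
    rw [← hmap, integral_map hYmeas.aemeasurable hf.aestronglyMeasurable]
  rw [h1]
  have h2 : ∫ ω, Real.exp (l * (f (fun i => X i ω) - ∫ x, f x ∂(Measure.pi ν))) ∂μ =
      ∫ x, Real.exp (l * (f x - ∫ x', f x' ∂(Measure.pi ν))) ∂(Measure.pi ν) := by
    rw [← hmap]
    exact (integral_map (f := fun x => Real.exp (l * (f x - ∫ x', f x' ∂(Measure.map Y μ))))
      hYmeas.aemeasurable
      ((measurable_const.mul (hf.sub measurable_const)).exp).aestronglyMeasurable).symm
  rw [h2]
  exact mcdiarmid_mgf_pi N ν f hf c hc hbd l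
end
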